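/- Let n, N ≥ 1, let F : ℂⁿ → ℂ^N be holomorphic (ℂ-differentiable everywhere), let a ∈ ℂ^N and p ∈ ℂⁿ. Define q : ℂⁿ → ℝ by q(w) = γ_w''(0), where γ_w(s) = ‖F(p + s·w) − a‖² for s ∈ ℝ (the Hessian quadratic form of ‖F − a‖² at p). If W is a real-linear subspace of ℂⁿ on which q is negative definite (q(w) < 0 for all nonzero w ∈ W), then dim_ℝ W ≤ n. -/

import Mathlib

open scoped RealInnerProductSpace

/-- Second derivative of `s ↦ ‖G (s*c)‖²` for a one-variable holomorphic `G`. -/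
lemma second_deriv_sq_norm_line {N : ℕ} (G : ℂ → EuclideanSpace ℂ (Fin N))
    (hG : Differentiable ℂ G) (c : ℂ) :
    deriv (deriv (fun s : ℝ => ‖G ((s : ℂ) * c)‖ ^ 2)) 0 =
      (⟪G 0, c • c • deriv (deriv G) 0⟫ + ⟪c • deriv G 0, c • deriv G 0⟫) +
      (⟪c • deriv G 0, c • deriv G 0⟫ + ⟪c • c • deriv (deriv G) 0, G 0⟫) := by
  have hGA : AnalyticOnNhd ℂ G Set.univ := fun z _ => hG.analyticAt z
  have hG' : Differentiable ℂ (deriv G) := by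
    have := (hGA.deriv).differentiableOn
    rw [← differentiableOn_univ]; exact this
  -- derivative of s ↦ G (s*c)
  have hline : ∀ (H : ℂ → EuclideanSpace ℂ (Fin N)), Differentiable ℂ H → ∀ s : ℝ,
      HasDerivAt (fun t : ℝ => H ((t : ℂ) * c)) (c • deriv H ((s : ℂ) * c)) s := by
    intro H hH s
    have h1 : HasDerivAt H (deriv H ((s : ℂ) * c)) ((s : ℂ) * c) :=
      (hH _).hasDerivAt
    have h2 : HasDerivAt (fun z : ℂ => z * c) c ((s : ℂ)) := by
      simpa using (hasDerivAt_id ((s : ℂ))).mul_const c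
    have h3 : HasDerivAt (fun t : ℝ => (t : ℂ) * c) c s := h2.comp_ofReal
    have := HasDerivAt.scomp (𝕜 := ℝ) (𝕜' := ℂ) s h1 h3
    exact this
  have hu : ∀ s : ℝ, HasDerivAt (fun t : ℝ => G ((t : ℂ) * c))
      (c • deriv G ((s : ℂ) * c)) s := hline G hG
  -- first derivative of the squared norm
  have hfun : (fun s : ℝ => ‖G ((s : ℂ) * c)‖ ^ 2) =
      fun s : ℝ => ⟪G ((s : ℂ) * c), G ((s : ℂ) * c)⟫ := by
    funext s; rw [real_inner_self_eq_norm_sq]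
  have hd1 : ∀ s : ℝ, HasDerivAt (fun t : ℝ => ⟪G ((t : ℂ) * c), G ((t : ℂ) * c)⟫)
      (⟪G ((s : ℂ) * c), c • deriv G ((s : ℂ) * c)⟫ +
        ⟪c • deriv G ((s : ℂ) * c), G ((s : ℂ) * c)⟫) s :=
    fun s => (hu s).inner ℝ (hu s)
  have hderiv1 : deriv (fun s : ℝ => ‖G ((s : ℂ) * c)‖ ^ 2) =
      fun s : ℝ => ⟪G ((s : ℂ) * c), c • deriv G ((s : ℂ) * c)⟫ +
        ⟪c • deriv G ((s : ℂ) * c), G ((s : ℂ) * c)⟫ := by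
    rw [hfun]; funext s; exact (hd1 s).deriv
  rw [hderiv1]
  -- second derivative
  have hu0 : HasDerivAt (fun t : ℝ => G ((t : ℂ) * c)) (c • deriv G 0) 0 := by
    simpa using hu 0
  have hB : HasDerivAt (fun t : ℝ => c • deriv G ((t : ℂ) * c))
      (c • c • deriv (deriv G) 0) 0 := by
    have := (hline (deriv G) hG' 0).const_smul c
    simp only [Complex.ofReal_zero, zero_mul] at this
    exact this
  have h2d : HasDerivAt (fun s : ℝ =>
      ⟪G ((s : ℂ) * c), c • deriv G ((s : ℂ) * c)⟫ +
        ⟪c • deriv G ((s : ℂ) * c), G ((s : ℂ) * c)⟫)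
      ((⟪G ((0 : ℝ) * c), c • c • deriv (deriv G) 0⟫ +
          ⟪c • deriv G 0, c • deriv G ((0 : ℝ) * c)⟫) +
        (⟪c • deriv G ((0 : ℝ) * c), c • deriv G 0⟫ +
          ⟪c • c • deriv (deriv G) 0, G ((0 : ℝ) * c)⟫)) 0 :=
    ((hu0.inner ℝ hB).add (hB.inner ℝ hu0))
  have := h2d.deriv
  rw [this]
  norm_num

theorem index_bound_sq_dist_of_holomorphic
    (n N : ℕ) (hn : 1 ≤ n) (hN : 1 ≤ N)
    (F : EuclideanSpace ℂ (Fin n) → EuclideanSpace ℂ (Fin N))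
    (hF : Differentiable ℂ F)
    (a : EuclideanSpace ℂ (Fin N))
    (p : EuclideanSpace ℂ (Fin n))
    (W : Submodule ℝ (EuclideanSpace ℂ (Fin n)))
    (hW : ∀ w ∈ W, w ≠ 0 →
      deriv (deriv (fun s : ℝ => ‖F (p + s • w) - a‖ ^ 2)) 0 < 0) :
    Module.finrank ℝ W ≤ n := by
  classical
  let E := EuclideanSpace ℂ (Fin n)
  by_contra hlt
  push_neg at hlt
  -- multiplication by I as a real-linear equivalence
  let J : E ≃ₗ[ℝ] E :=
    (LinearEquiv.smulOfNeZero ℂ E Complex.I Complex.I_ne_zero).restrictScalars ℝ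
  have hJ : ∀ x : E, J x = Complex.I • x := fun x => rfl
  set S : Submodule ℝ E := W.map (J : E →ₗ[ℝ] E) with hS
  have hSrank : Module.finrank ℝ S = Module.finrank ℝ W :=
    LinearEquiv.finrank_map_eq J W
  have hE : Module.finrank ℝ E = 2 * n := by
    have := (WithLp.linearEquiv 2 ℝ (∀ _ : Fin n, ℂ)).finrank_eq
    rw [this, Module.finrank_pi_fintype]
    simp [Complex.finrank_real_complex, Finset.sum_const, mul_comm]
  have hsum : Module.finrank ℝ W + Module.finrank ℝ S =
      Module.finrank ℝ ↥(W ⊔ S) + Module.finrank ℝ ↥(W ⊓ S) :=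
    (Submodule.finrank_sup_add_finrank_inf_eq W S).symm
  have hle : Module.finrank ℝ ↥(W ⊔ S) ≤ 2 * n := hE ▸ Submodule.finrank_le _
  have hpos : 0 < Module.finrank ℝ ↥(W ⊓ S) := by omega
  have hnebot : W ⊓ S ≠ ⊥ := by
    intro h
    rw [h, finrank_bot] at hpos
    exact lt_irrefl 0 hpos
  obtain ⟨x, hx, hx0⟩ := Submodule.exists_mem_ne_zero_of_ne_bot hnebot
  obtain ⟨hxW, hxS⟩ := hx
  obtain ⟨v, hvW, hvx⟩ := hxS
  replace hvx : Complex.I • v = x := hvx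
  have hv0 : v ≠ 0 := by
    rintro rfl; simp at hvx; exact hx0 hvx.symm
  -- set up the restriction of F to the complex line through p with direction v
  set G : ℂ → EuclideanSpace ℂ (Fin N) := fun z => F (p + z • v) - a with hGdef
  have hG : Differentiable ℂ G := by
    have h1 : Differentiable ℂ (fun z : ℂ => p + z • v) :=
      (differentiable_id.smul_const v).const_add p
    simpa [hGdef, Function.comp_def] using (hF.comp h1).sub_const a
  have key := second_deriv_sq_norm_line G hG
  -- identify the two curves
  have hcurve1 : (fun s : ℝ => ‖F (p + s • v) - a‖ ^ 2) =
      fun s : ℝ => ‖G ((s : ℂ) * 1)‖ ^ 2 := by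
    funext s
    simp only [hGdef]
    have : ((s : ℂ) * 1) • v = s • v := by rw [mul_one, Complex.coe_smul]
    rw [this]
  have hcurve2 : (fun s : ℝ => ‖F (p + s • x) - a‖ ^ 2) =
      fun s : ℝ => ‖G ((s : ℂ) * Complex.I)‖ ^ 2 := by
    funext s
    simp only [hGdef]
    have : ((s : ℂ) * Complex.I) • v = s • x := by
      rw [← hvx, mul_smul, Complex.coe_smul, smul_comm]
    rw [this]
  have h1 := hW v hvW hv0
  have h2 := hW x hxW hx0
  rw [hcurve1, key 1] at h1
  rw [hcurve2, key Complex.I] at h2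
  set g0 := G 0
  set d1 := deriv G 0
  set d2 := deriv (deriv G) 0
  have hII : Complex.I • Complex.I • d2 = -d2 := by
    rw [smul_smul, Complex.I_mul_I, neg_one_smul]
  rw [hII] at h2
  simp only [one_smul, inner_neg_left, inner_neg_right] at h1 h2
  have hd1 : (0:ℝ) ≤ ⟪d1, d1⟫ := real_inner_self_nonneg
  have hId1 : (0:ℝ) ≤ ⟪Complex.I • d1, Complex.I • d1⟫ := real_inner_self_nonneg
  have hsym : ⟪d2, g0⟫ = ⟪g0, d2⟫ := real_inner_comm _ _
  rw [hsym] at h1 h2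
  linarith
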